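/- Let (γ, ℓ, ℓ⁽²⁾) be null metric hypersurface data on a finite-dimensional real vector space V with contravariant data (P, n, 0), and let S ⊆ V be any subspace complementary to the line spanned by n. Then: (i) the restriction h := γ|_S is a nondegenerate symmetric bilinear form on S; (ii) letting ℓ♯ ∈ S be the unique vector with h(ℓ♯, X) = ℓ(X) for all X ∈ S, ℓ♯⁽²⁾ := h(ℓ♯, ℓ♯), and h♯ the symmetric bilinear form on S* inverse to h, the tensor P decomposes as P(α, β) = h♯(α|_S, β|_S) − α(n)·β(ℓ♯) − β(n)·α(ℓ♯) − (ℓ⁽²⁾ − ℓ♯⁽²⁾)·α(n)·β(n) for all α, β ∈ V*, where α|_S denotes the restriction of α to S. -/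

import Mathlib

/-- Let `(γ, ℓ, ℓ2)` be null metric hypersurface data (contravariant data
`(P, n, 0)`) and `S ⊆ V` a subspace complementary to the line spanned by `n`.  Then:
(i) the restriction `h := γ|_S` is nondegenerate;
(ii) letting `ℓ♯ ∈ S` be the unique vector with `h(ℓ♯, X) = ℓ(X)` for all `X ∈ S`,
`ℓ♯⁽²⁾ := h(ℓ♯, ℓ♯)`, and `h♯` the symmetric bilinear form on `S*` inverse to `h`, the
tensor `P` decomposes as
`P(α,β) = h♯(α|_S, β|_S) − α(n)β(ℓ♯) − β(n)α(ℓ♯) − (ℓ2 − ℓ♯⁽²⁾)α(n)β(n)`. -/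
theorem stmt_5 {V : Type*} [AddCommGroup V] [Module ℝ V] [FiniteDimensional ℝ V]
    (γ : V →ₗ[ℝ] V →ₗ[ℝ] ℝ) (ℓ : Module.Dual ℝ V) (ℓ2 : ℝ)
    (hγsymm : ∀ x y : V, γ x y = γ y x)
    (hnondeg : ∀ (W : V) (a : ℝ),
      (∀ (Z : V) (b : ℝ), γ W Z + a * ℓ Z + b * ℓ W + a * b * ℓ2 = 0) → W = 0 ∧ a = 0)
    (P : Module.Dual ℝ V →ₗ[ℝ] Module.Dual ℝ V →ₗ[ℝ] ℝ) (n : V)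
    (hPsymm : ∀ α β : Module.Dual ℝ V, P α β = P β α)
    (h1 : ∀ v : V, γ n v = 0)
    (h2 : ℓ n = 1)
    (h3 : ∀ α : Module.Dual ℝ V, P α ℓ + ℓ2 * α n = 0)
    (h4 : ∀ (α : Module.Dual ℝ V) (v : V), P α (γ v) + α n * ℓ v = α v)
    (S : Submodule ℝ V) (hS : IsCompl S (Submodule.span ℝ {n})) :
    -- (i): h := γ|_S is nondegenerate
    (∀ x : S, (∀ y : S, γ (x : V) (y : V) = 0) → x = 0) ∧
    -- (ii): decomposition of P
    (∀ ls : S, (∀ X : S, γ (ls : V) (X : V) = ℓ (X : V)) →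
      ∀ hs : Module.Dual ℝ S →ₗ[ℝ] Module.Dual ℝ S →ₗ[ℝ] ℝ,
        (∀ α β : Module.Dual ℝ S, hs α β = hs β α) →
        (∀ (x : S) (β : Module.Dual ℝ S), hs ((γ (x : V)).domRestrict S) β = β x) →
        ∀ α β : Module.Dual ℝ V,
          P α β = hs (α.domRestrict S) (β.domRestrict S)
            - α n * β (ls : V) - β n * α (ls : V)
            - (ℓ2 - γ (ls : V) (ls : V)) * (α n * β n)) := by
  -- every vector decomposes as s + c • n
  have hdecomp : ∀ w : V, ∃ (y : V) (c : ℝ), y ∈ S ∧ w = y + c • n := by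
    intro w
    have hw : w ∈ S ⊔ Submodule.span ℝ {n} := by
      rw [hS.sup_eq_top]; trivial
    obtain ⟨y, hy, z, hz, hyz⟩ := Submodule.mem_sup.mp hw
    obtain ⟨c, rfl⟩ := Submodule.mem_span_singleton.mp hz
    exact ⟨y, c, hy, hyz.symm⟩
  -- part (i)
  have part1 : ∀ x : S, (∀ y : S, γ (x : V) (y : V) = 0) → x = 0 := by
    intro x hx
    -- γ (x : V) vanishes on all of V
    have hγx : ∀ w : V, γ (x : V) w = 0 := by
      intro w
      obtain ⟨y, c, hy, rfl⟩ := hdecomp w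
      have h1' : γ (x : V) n = 0 := by rw [hγsymm]; exact h1 x
      have := hx ⟨y, hy⟩
      simp only [map_add, map_smul, smul_eq_mul]
      simp only [Submodule.coe_mk] at this
      rw [this, h1']; ring
    -- consider W = x - ℓ(x) • n
    set W : V := (x : V) - ℓ (x : V) • n with hW
    have hWz : W = 0 ∧ (0 : ℝ) = 0 := by
      apply hnondeg
      intro Z b
      have hγW : γ W Z = 0 := by
        simp only [hW, map_sub, map_smul, LinearMap.sub_apply, LinearMap.smul_apply,
          smul_eq_mul, hγx Z, h1 Z]
        ring
      have hℓW : ℓ W = 0 := by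
        simp only [hW, map_sub, map_smul, smul_eq_mul, h2]; ring
      rw [hγW, hℓW]; ring
    have hxmem : (x : V) ∈ Submodule.span ℝ {n} := by
      have : (x : V) = ℓ (x : V) • n := by
        have := hWz.1
        rw [hW, sub_eq_zero] at this
        exact this
      rw [this]
      exact Submodule.smul_mem _ _ (Submodule.mem_span_singleton_self n)
    have : (x : V) ∈ (⊥ : Submodule ℝ V) := hS.disjoint.le_bot ⟨x.2, hxmem⟩
    exact Subtype.ext (Submodule.mem_bot ℝ |>.mp this)
  refine ⟨part1, ?_⟩
  intro ls hls hs hssymm hsinv α β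
  -- the map g : S → Dual S, x ↦ γ(x)|_S
  let g : S →ₗ[ℝ] Module.Dual ℝ S :=
    { toFun := fun x => (γ (x : V)).domRestrict S
      map_add' := by intros; ext y; simp
      map_smul' := by intros; ext y; simp }
  have hginj : Function.Injective g := by
    rw [← LinearMap.ker_eq_bot]
    rw [Submodule.eq_bot_iff]
    intro x hx
    apply part1
    intro y
    have : g x = 0 := hx
    calc γ (x : V) (y : V) = g x y := rfl
      _ = 0 := by rw [this]; rfl
  have hgsurj : Function.Surjective g := by
    have hfr : Module.finrank ℝ S = Module.finrank ℝ (Module.Dual ℝ S) :=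
      (Subspace.dual_finrank_eq).symm
    exact (LinearMap.injective_iff_surjective_of_finrank_eq_finrank hfr).mp hginj
  -- obtain x with γ(x)|_S = β|_S - β(n) ℓ|_S
  obtain ⟨c, hc⟩ : ∃ c, β n = c := ⟨β n, rfl⟩
  obtain ⟨x, hxg⟩ := hgsurj (β.domRestrict S - c • ℓ.domRestrict S)
  have hxgS : ∀ y : S, γ (x : V) (y : V) = β (y : V) - c * ℓ (y : V) := by
    intro y
    have := congrFun (congrArg DFunLike.coe hxg) y
    simp at this; exact this
  have hγxn : γ (x : V) n = 0 := by rw [hγsymm]; exact h1 x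
  -- β = c • ℓ + γ x
  have hβ : β = c • ℓ + γ (x : V) := by
    ext w
    obtain ⟨y, c', hy, rfl⟩ := hdecomp w
    have := hxgS ⟨y, hy⟩
    simp only [Submodule.coe_mk] at this
    simp only [map_add, map_smul, LinearMap.add_apply, LinearMap.smul_apply, smul_eq_mul,
      h2, this, hγxn, ← hc]
    ring
  have hβapp : ∀ w : V, β w = c * ℓ w + γ (x : V) w := by
    intro w; rw [hβ]; simp
  -- key evaluations
  have hPℓ : P α ℓ = -(ℓ2 * α n) := by linarith [h3 α]
  have hPγx : P α (γ (x : V)) = α (x : V) - α n * ℓ (x : V) := by linarith [h4 α (x : V)]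
  have hLHS : P α β = c * (-(ℓ2 * α n)) + (α (x : V) - α n * ℓ (x : V)) := by
    rw [hβ]
    simp only [map_add, map_smul, smul_eq_mul, hPℓ, hPγx]
  -- ℓ|_S = (γ ls)|_S
  have hℓres : ℓ.domRestrict S = (γ (ls : V)).domRestrict S := by
    ext y; exact (hls y).symm
  have hhsℓ : hs (α.domRestrict S) (ℓ.domRestrict S) = α (ls : V) := by
    rw [hℓres, hssymm, hsinv]; rfl
  have hhsγx : hs (α.domRestrict S) ((γ (x : V)).domRestrict S) = α (x : V) := by
    rw [hssymm, hsinv]; rfl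
  -- restriction of β
  have hβres : β.domRestrict S = c • ℓ.domRestrict S + (γ (x : V)).domRestrict S := by
    rw [hβ]; ext y; simp
  have hhsβ : hs (α.domRestrict S) (β.domRestrict S) = c * α (ls : V) + α (x : V) := by
    rw [hβres]
    simp only [map_add, map_smul, smul_eq_mul, hhsℓ, hhsγx]
  -- β at ls
  have hℓls : ℓ (ls : V) = γ (ls : V) (ls : V) := (hls ls).symm
  have hγxls : γ (x : V) (ls : V) = ℓ (x : V) := by
    rw [hγsymm]; exact hls x
  have hβls : β (ls : V) = c * γ (ls : V) (ls : V) + ℓ (x : V) := by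
    rw [hβapp, hℓls, hγxls]
  rw [hLHS, hhsβ, hβls, hc]
  ring
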